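/- arXiv:1807.04675 — 3 statements merged into one kernel-verified Lean document; each statement's English description precedes it below -/
import Mathlib

section
/- Let X be a measure space, p ∈ [1,∞), and ζ ∈ AC([0,T]; L^p(X;ℝⁿ)). Then for every t ∈ [0,T], the essential variation essVar(ζ;0,t) (essential supremum over all partitions 0 = s_0 < … < s_m = t of Σ_j |ζ(s_j) − ζ(s_{j-1})|, as measurable functions on X) satisfies essVar(ζ;0,t)(x) = ∫_0^t |ζ̇(r;x)| dr for a.e. x ∈ X, where the right-hand side is a Bochner integral in L^p(X). -/
open MeasureTheory

lemma osc_bound {E : Type*} [NormedAddCommGroup E] [NormedSpace ℝ E] [CompleteSpace E] {g : ℝ → E}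
    (hg : Continuous g) {a b η : ℝ} (hab : a ≤ b) (hη : 0 ≤ η)
    (hosc : ∀ r ∈ Set.Icc a b, ‖g r - g a‖ ≤ η) :
    ∫ r in a..b, ‖g r‖ ≤ ‖∫ r in a..b, g r‖ + 2 * η * (b - a) := by
  have hgi : IntervalIntegrable g volume a b := hg.intervalIntegrable a b
  have h1 : ∫ r in a..b, ‖g r‖ ≤ (b - a) * ‖g a‖ + (b - a) * η := by
    have := intervalIntegral.integral_mono_on (μ := volume) hab
      (hg.norm.intervalIntegrable a b) (_root_.intervalIntegrable_const (c := ‖g a‖ + η))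
      (fun r hr => by
        calc ‖g r‖ = ‖g a + (g r - g a)‖ := by rw [add_sub_cancel]
        _ ≤ ‖g a‖ + ‖g r - g a‖ := norm_add_le _ _
        _ ≤ ‖g a‖ + η := by linarith [hosc r hr])
    simpa [smul_eq_mul, mul_add] using this
  have h2 : ∫ r in a..b, g r = (b - a) • g a + ∫ r in a..b, (g r - g a) := by
    rw [intervalIntegral.integral_sub hgi (_root_.intervalIntegrable_const (c := g a)),
      intervalIntegral.integral_const]
    abel
  have h3 : ‖∫ r in a..b, (g r - g a)‖ ≤ η * (b - a) := by
    have := intervalIntegral.norm_integral_le_of_norm_le_const (C := η) (f := fun r => g r - g a)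
      (a := a) (b := b) (fun r hr => hosc r (by
        have : Set.uIoc a b ⊆ Set.Icc a b := by
          rw [Set.uIoc_of_le hab]; exact Set.Ioc_subset_Icc_self
        exact this hr))
    rwa [abs_of_nonneg (by linarith)] at this
  have hnorm : ‖(b - a) • g a‖ = (b - a) * ‖g a‖ := by
    rw [norm_smul, Real.norm_eq_abs, abs_of_nonneg (by linarith)]
  set u := (b - a) • g a
  set v := ∫ r in a..b, (g r - g a)
  have key : ‖u‖ - ‖v‖ ≤ ‖u + v‖ := by
    have h := norm_add_le (u + v) (-v)
    simp only [add_neg_cancel_right, norm_neg] at h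
    linarith
  rw [h2]
  rw [hnorm] at key
  linarith

/-- Key lemma: the integral of the norm is approximated from below by dyadic variation sums. -/
lemma dyadic_approx {E : Type*} [NormedAddCommGroup E] [NormedSpace ℝ E] [CompleteSpace E]
    {f : ℝ → E} {t : ℝ} (ht : 0 < t) (hf : IntegrableOn f (Set.Icc 0 t))
    {ε : ℝ} (hε : 0 < ε) :
    ∃ k : ℕ, ∫ r in (0:ℝ)..t, ‖f r‖ ≤
      (∑ j ∈ Finset.range (2 ^ k),
        ‖∫ r in (((j:ℕ):ℝ) * t / 2 ^ k)..(((j + 1 : ℕ):ℝ) * t / 2 ^ k), f r‖) + ε := by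
  classical
  set F : ℝ → E := (Set.Icc (0:ℝ) t).indicator f with hFdef
  have hF : Integrable F volume := hf.integrable_indicator measurableSet_Icc
  obtain ⟨g, hgsupp, hgapprox, hgcont, hgint⟩ :=
    hF.exists_hasCompactSupport_integral_sub_le (show (0:ℝ) < ε / 4 by linarith)
  have hgu : UniformContinuous g := hgsupp.uniformContinuous_of_continuous hgcont
  obtain ⟨δ, hδ, hδprop⟩ := Metric.uniformContinuous_iff.mp hgu (ε / (4 * t)) (by positivity)
  obtain ⟨k, hk⟩ : ∃ k : ℕ, t / δ < 2 ^ k := pow_unbounded_of_one_lt _ one_lt_two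
  refine ⟨k, ?_⟩
  have hNpos : (0:ℝ) < 2 ^ k := by positivity
  have hmesh : t / 2 ^ k < δ := by
    rw [div_lt_iff₀ hNpos]
    rw [div_lt_iff₀ hδ] at hk
    nlinarith
  set s : ℕ → ℝ := fun j => (j : ℝ) * t / 2 ^ k with hsdef
  have hs0 : s 0 = 0 := by simp [hsdef]
  have hsN : s (2 ^ k) = t := by
    simp only [hsdef]
    push_cast
    field_simp
  have hstep : ∀ j : ℕ, s (j + 1) - s j = t / 2 ^ k := by
    intro j; simp only [hsdef]; push_cast; ring
  have hsmono : ∀ j : ℕ, s j ≤ s (j + 1) := by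
    intro j
    have := hstep j
    have : (0:ℝ) ≤ t / 2 ^ k := by positivity
    linarith [hstep j]
  have hsmem : ∀ j ≤ 2 ^ k, s j ∈ Set.Icc (0:ℝ) t := by
    intro j hj
    constructor
    · simp only [hsdef]; positivity
    · simp only [hsdef]
      rw [div_le_iff₀ hNpos]
      have : (j : ℝ) ≤ 2 ^ k := by exact_mod_cast hj
      nlinarith
  -- integrability facts
  have hFii : ∀ a b : ℝ, IntervalIntegrable F volume a b :=
    fun a b => hF.integrableOn.intervalIntegrable
  have hgii : ∀ a b : ℝ, IntervalIntegrable g volume a b :=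
    fun a b => hgcont.intervalIntegrable a b
  have hFgii : ∀ a b : ℝ, IntervalIntegrable (fun r => ‖F r - g r‖) volume a b :=
    fun a b => ((hF.sub hgint).norm).integrableOn.intervalIntegrable
  -- the L¹ error on any interval inside [0,t] is ≤ ε/4
  have herr : ∫ r in (0:ℝ)..t, ‖F r - g r‖ ≤ ε / 4 := by
    rw [intervalIntegral.integral_of_le ht.le]
    refine le_trans (setIntegral_le_integral (hF.sub hgint).norm
      (Filter.Eventually.of_forall fun r => norm_nonneg _)) hgapprox
  -- Step 1: ∫‖f‖ = ∫‖F‖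
  have step1 : ∫ r in (0:ℝ)..t, ‖f r‖ = ∫ r in (0:ℝ)..t, ‖F r‖ := by
    apply intervalIntegral.integral_congr
    intro r hr
    rw [Set.uIcc_of_le ht.le] at hr
    simp [hFdef, Set.indicator_of_mem hr]
  -- Step 2: ∫‖F‖ ≤ ∫‖g‖ + ε/4
  have step2 : ∫ r in (0:ℝ)..t, ‖F r‖ ≤ (∫ r in (0:ℝ)..t, ‖g r‖) + ε / 4 := by
    have hmono : ∫ r in (0:ℝ)..t, ‖F r‖ ≤ ∫ r in (0:ℝ)..t, (‖g r‖ + ‖F r - g r‖) := by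
      apply intervalIntegral.integral_mono_on ht.le (hF.norm.integrableOn.intervalIntegrable)
        ((hgcont.norm.intervalIntegrable 0 t).add (hFgii 0 t))
      intro r _
      calc ‖F r‖ = ‖g r + (F r - g r)‖ := by rw [add_sub_cancel]
        _ ≤ ‖g r‖ + ‖F r - g r‖ := norm_add_le _ _
    rw [intervalIntegral.integral_add (hgcont.norm.intervalIntegrable 0 t) (hFgii 0 t)] at hmono
    linarith
  -- Step 3: split ∫‖g‖ into dyadic pieces
  have step3 : ∫ r in (0:ℝ)..t, ‖g r‖
      = ∑ j ∈ Finset.range (2 ^ k), ∫ r in s j..s (j + 1), ‖g r‖ := by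
    rw [intervalIntegral.sum_integral_adjacent_intervals
      (fun j _ => hgcont.norm.intervalIntegrable _ _), hs0, hsN]
  -- Step 4: per-piece oscillation bound
  have step4 : ∀ j ∈ Finset.range (2 ^ k),
      ∫ r in s j..s (j + 1), ‖g r‖ ≤ ‖∫ r in s j..s (j + 1), g r‖
        + 2 * (ε / (4 * t)) * (t / 2 ^ k) := by
    intro j _
    have := osc_bound (η := ε / (4 * t)) hgcont (hsmono j) (by positivity)
      (fun r hr => by
        have hd : dist r (s j) < δ := by
          rw [Real.dist_eq, abs_of_nonneg (by linarith [hr.1])]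
          linarith [hstep j, hr.2]
        rw [← dist_eq_norm]
        exact (hδprop hd).le)
    rwa [hstep j] at this
  -- Step 5: compare ∫ g with ∫ F per piece
  have step5 : ∀ j ∈ Finset.range (2 ^ k),
      ‖∫ r in s j..s (j + 1), g r‖ ≤ ‖∫ r in s j..s (j + 1), F r‖
        + ∫ r in s j..s (j + 1), ‖F r - g r‖ := by
    intro j _
    have heq : ∫ r in s j..s (j + 1), g r
        = (∫ r in s j..s (j + 1), F r) - ∫ r in s j..s (j + 1), (F r - g r) := by
      rw [intervalIntegral.integral_sub (hFii _ _) (hgii _ _)]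
      abel
    rw [heq]
    refine le_trans (norm_sub_le _ _) ?_
    gcongr
    exact le_trans (intervalIntegral.norm_integral_le_integral_norm (hsmono j)) le_rfl
  -- Step 6: ∫ F over a dyadic piece equals ∫ f
  have step6 : ∀ j ∈ Finset.range (2 ^ k),
      ∫ r in s j..s (j + 1), F r = ∫ r in s j..s (j + 1), f r := by
    intro j hj
    apply intervalIntegral.integral_congr
    intro r hr
    rw [Set.uIcc_of_le (hsmono j)] at hr
    have hj' : j + 1 ≤ 2 ^ k := Finset.mem_range.mp hj
    have h1 := hsmem j (le_of_lt (Finset.mem_range.mp hj))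
    have h2 := hsmem (j + 1) hj'
    have : r ∈ Set.Icc (0:ℝ) t := ⟨le_trans h1.1 hr.1, le_trans hr.2 h2.2⟩
    simp [hFdef, Set.indicator_of_mem this]
  -- sum of errors over pieces
  have herrsum : ∑ j ∈ Finset.range (2 ^ k), ∫ r in s j..s (j + 1), ‖F r - g r‖ ≤ ε / 4 := by
    rw [intervalIntegral.sum_integral_adjacent_intervals (fun j _ => hFgii _ _), hs0, hsN]
    exact herr
  have hosctotal : (2 ^ k : ℝ) * (2 * (ε / (4 * t)) * (t / 2 ^ k)) = ε / 2 := by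
    field_simp
    ring
  calc ∫ r in (0:ℝ)..t, ‖f r‖
      = ∫ r in (0:ℝ)..t, ‖F r‖ := step1
    _ ≤ (∫ r in (0:ℝ)..t, ‖g r‖) + ε / 4 := step2
    _ = (∑ j ∈ Finset.range (2 ^ k), ∫ r in s j..s (j + 1), ‖g r‖) + ε / 4 := by rw [step3]
    _ ≤ (∑ j ∈ Finset.range (2 ^ k), (‖∫ r in s j..s (j + 1), g r‖
          + 2 * (ε / (4 * t)) * (t / 2 ^ k))) + ε / 4 := by
        gcongr with j hj
        exact step4 j hj
    _ = (∑ j ∈ Finset.range (2 ^ k), ‖∫ r in s j..s (j + 1), g r‖) + ε / 2 + ε / 4 := by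
        rw [Finset.sum_add_distrib, Finset.sum_const, Finset.card_range, nsmul_eq_mul]
        push_cast
        rw [hosctotal]
    _ ≤ (∑ j ∈ Finset.range (2 ^ k), (‖∫ r in s j..s (j + 1), F r‖
          + ∫ r in s j..s (j + 1), ‖F r - g r‖)) + ε / 2 + ε / 4 := by
        gcongr with j hj
        exact step5 j hj
    _ = (∑ j ∈ Finset.range (2 ^ k), ‖∫ r in s j..s (j + 1), F r‖)
          + (∑ j ∈ Finset.range (2 ^ k), ∫ r in s j..s (j + 1), ‖F r - g r‖)
          + ε / 2 + ε / 4 := by rw [Finset.sum_add_distrib]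
    _ ≤ (∑ j ∈ Finset.range (2 ^ k), ‖∫ r in s j..s (j + 1), F r‖) + ε / 4 + ε / 2 + ε / 4 := by
        linarith [herrsum]
    _ = (∑ j ∈ Finset.range (2 ^ k), ‖∫ r in s j..s (j + 1), f r‖) + ε := by
        rw [Finset.sum_congr rfl (fun j hj => by rw [step6 j hj])]; ring


/-- For `ζ ∈ AC([0,T]; L^p(X;ℝⁿ))` with a.e. time derivative `dζ`, the
function `x ↦ ∫_0^t |dζ(r;x)| dr` is (a version of) the essential variation
`essVar(ζ; 0, t)`: it dominates, a.e. in `X`, the variation sums of every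
partition of `[0,t]`, and it is a.e. below any measurable function with this
property. -/
theorem stmt_5 {X : Type*} [MeasurableSpace X] (μ : Measure X)
    (n : ℕ) (p T : ℝ) (hp : 1 ≤ p) (hT : 0 < T)
    (ζ dζ : ℝ → X → EuclideanSpace ℝ (Fin n))
    (hζmeas : ∀ t, AEMeasurable (ζ t) μ)
    (hdζmeas : ∀ r, AEMeasurable (dζ r) μ)
    (hLp : ∀ t ∈ Set.Icc (0 : ℝ) T, MemLp (ζ t) (ENNReal.ofReal p) μ)
    (hdint : ∀ᵐ x ∂μ, IntegrableOn (fun r => dζ r x) (Set.Icc 0 T))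
    (hAC : ∀ t ∈ Set.Icc (0 : ℝ) T,
      ∀ᵐ x ∂μ, ζ t x = ζ 0 x + ∫ r in (0:ℝ)..t, dζ r x) :
    ∀ t ∈ Set.Icc (0 : ℝ) T,
      (∀ (m : ℕ) (s : ℕ → ℝ), s 0 = 0 → s m = t → (∀ j < m, s j < s (j + 1)) →
        ∀ᵐ x ∂μ, ∑ j ∈ Finset.range m, ‖ζ (s (j + 1)) x - ζ (s j) x‖
          ≤ ∫ r in (0:ℝ)..t, ‖dζ r x‖) ∧
      (∀ W : X → ℝ, Measurable W →
        (∀ (m : ℕ) (s : ℕ → ℝ), s 0 = 0 → s m = t →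
          (∀ j < m, s j < s (j + 1)) →
          ∀ᵐ x ∂μ, ∑ j ∈ Finset.range m, ‖ζ (s (j + 1)) x - ζ (s j) x‖ ≤ W x) →
        ∀ᵐ x ∂μ, (∫ r in (0:ℝ)..t, ‖dζ r x‖) ≤ W x) := by
  intro t ht
  have hmem : ∀ {a : ℝ}, a ∈ Set.Icc (0:ℝ) t → a ∈ Set.Icc (0:ℝ) T :=
    fun h => ⟨h.1, le_trans h.2 ht.2⟩
  constructor
  · -- every partition sum is dominated by the integral of the norm
    intro m s hs0 hsm hsinc
    have hmono : ∀ i j : ℕ, i ≤ j → j ≤ m → s i ≤ s j := by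
      intro i j hij hjm
      induction j, hij using Nat.le_induction with
      | base => exact le_rfl
      | succ j hij ih => exact le_trans (ih (by omega)) (hsinc j (by omega)).le
    have hsmem : ∀ j ≤ m, s j ∈ Set.Icc (0:ℝ) t := fun j hj =>
      ⟨hs0 ▸ hmono 0 j (Nat.zero_le j) hj, hsm ▸ hmono j m hj le_rfl⟩
    have hACae : ∀ᵐ x ∂μ, ∀ j : ℕ, j ≤ m →
        ζ (s j) x = ζ 0 x + ∫ r in (0:ℝ)..(s j), dζ r x := by
      rw [ae_all_iff]
      intro j
      by_cases hj : j ≤ m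
      · exact (hAC (s j) (hmem (hsmem j hj))).mono fun x hx _ => hx
      · exact Filter.Eventually.of_forall fun x hj' => absurd hj' hj
    filter_upwards [hdint, hACae] with x hxint hxac
    have hii : ∀ j, j ≤ m → IntervalIntegrable (fun r => dζ r x) volume 0 (s j) := by
      intro j hj
      apply (hxint.mono_set _).intervalIntegrable
      rw [Set.uIcc_of_le (hsmem j hj).1]
      exact Set.Icc_subset_Icc le_rfl (le_trans (hsmem j hj).2 ht.2)
    have hii2 : ∀ j, j < m →
        IntervalIntegrable (fun r => dζ r x) volume (s j) (s (j+1)) := by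
      intro j hj
      apply (hxint.mono_set _).intervalIntegrable
      rw [Set.uIcc_of_le (hsinc j hj).le]
      exact Set.Icc_subset_Icc (hsmem j hj.le).1 (le_trans (hsmem (j+1) hj).2 ht.2)
    calc ∑ j ∈ Finset.range m, ‖ζ (s (j + 1)) x - ζ (s j) x‖
        = ∑ j ∈ Finset.range m, ‖∫ r in (s j)..(s (j+1)), dζ r x‖ := by
          refine Finset.sum_congr rfl fun j hj => ?_
          have hjm := Finset.mem_range.mp hj
          rw [hxac (j+1) hjm, hxac j hjm.le,
            show ∀ A B C : EuclideanSpace ℝ (Fin n), (A + B) - (A + C) = B - C from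
              fun A B C => by abel,
            intervalIntegral.integral_interval_sub_left (hii (j+1) hjm) (hii j hjm.le)]
      _ ≤ ∑ j ∈ Finset.range m, ∫ r in (s j)..(s (j+1)), ‖dζ r x‖ :=
          Finset.sum_le_sum fun j hj =>
            intervalIntegral.norm_integral_le_integral_norm
              (hsinc j (Finset.mem_range.mp hj)).le
      _ = ∫ r in (s 0)..(s m), ‖dζ r x‖ :=
          intervalIntegral.sum_integral_adjacent_intervals fun j hj => (hii2 j hj).norm
      _ = ∫ r in (0:ℝ)..t, ‖dζ r x‖ := by rw [hs0, hsm]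
  · -- the integral of the norm is a.e. below any essential upper bound
    intro W hW hWpart
    rcases eq_or_lt_of_le ht.1 with h0 | htpos
    · have h := hWpart 0 (fun _ => 0) rfl (by simp [← h0]) (fun j hj => absurd hj (Nat.not_lt_zero j))
      filter_upwards [h] with x hx
      rw [← h0, intervalIntegral.integral_same]
      simpa using hx
    · have hdyadic : ∀ k : ℕ, ∀ᵐ x ∂μ,
          ∑ j ∈ Finset.range (2^k),
            ‖ζ (((j+1:ℕ):ℝ) * t / 2^k) x - ζ (((j:ℕ):ℝ) * t / 2^k) x‖ ≤ W x := by
        intro k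
        have hNpos : (0:ℝ) < 2^k := by positivity
        refine hWpart (2^k) (fun j => (j:ℝ) * t / 2^k) (by simp) ?_ ?_
        · push_cast; field_simp
        · intro j hj
          show (j:ℝ) * t / 2^k < ((j+1:ℕ):ℝ) * t / 2^k
          push_cast
          rw [div_lt_div_iff₀ hNpos hNpos]
          nlinarith [htpos, hNpos, Nat.cast_nonneg (α := ℝ) j]
      have hmem' : ∀ k j : ℕ, j ≤ 2^k → ((j:ℝ) * t / 2^k) ∈ Set.Icc (0:ℝ) t := by
        intro k j hj
        have hNpos : (0:ℝ) < 2^k := by positivity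
        have hcast : (j:ℝ) ≤ 2^k := by exact_mod_cast hj
        constructor
        · positivity
        · rw [div_le_iff₀ hNpos]; nlinarith
      have hACdy : ∀ᵐ x ∂μ, ∀ k : ℕ, ∀ j : ℕ, j ≤ 2^k →
          ζ ((j:ℝ) * t / 2^k) x = ζ 0 x + ∫ r in (0:ℝ)..((j:ℝ) * t / 2^k), dζ r x := by
        rw [ae_all_iff]
        intro k
        rw [ae_all_iff]
        intro j
        by_cases hj : j ≤ 2^k
        · exact (hAC _ (hmem (hmem' k j hj))).mono fun x hx _ => hx
        · exact Filter.Eventually.of_forall fun x hj' => absurd hj' hj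
      filter_upwards [hdint, ae_all_iff.2 hdyadic, hACdy] with x hxint hxsum hxac
      have hii : ∀ a ∈ Set.Icc (0:ℝ) t,
          IntervalIntegrable (fun r => dζ r x) volume 0 a := by
        intro a ha
        apply (hxint.mono_set _).intervalIntegrable
        rw [Set.uIcc_of_le ha.1]
        exact Set.Icc_subset_Icc le_rfl (le_trans ha.2 ht.2)
      have hsum : ∀ k : ℕ, ∑ j ∈ Finset.range (2^k),
          ‖∫ r in (((j:ℕ):ℝ) * t / 2^k)..(((j+1:ℕ):ℝ) * t / 2^k), dζ r x‖ ≤ W x := by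
        intro k
        refine le_trans (le_of_eq ?_) (hxsum k)
        refine Finset.sum_congr rfl fun j hj => ?_
        have hjlt := Finset.mem_range.mp hj
        rw [hxac k (j+1) hjlt, hxac k j hjlt.le,
          show ∀ A B C : EuclideanSpace ℝ (Fin n), (A + B) - (A + C) = B - C from
            fun A B C => by abel,
          intervalIntegral.integral_interval_sub_left
            (hii _ (hmem' k (j+1) hjlt)) (hii _ (hmem' k j hjlt.le))]
      have hint_t : IntegrableOn (fun r => dζ r x) (Set.Icc 0 t) :=
        hxint.mono_set (Set.Icc_subset_Icc le_rfl ht.2)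
      refine le_of_forall_pos_le_add fun ε hε => ?_
      obtain ⟨k, hk⟩ := dyadic_approx htpos hint_t hε
      exact le_trans hk (by linarith [hsum k])
end

section
/- Let G := {h ∈ (H¹(Ω))' : ⟨h,β⟩ ≥ 0 for every β ∈ H¹(Ω) with β ≤ 0 a.e.}, F := {β ∈ H¹(Ω) : β ≤ 0 a.e., ‖β‖_{L²} ≤ 1}, and Φ(g) := sup_{β∈F}⟨−g,β⟩ for g ∈ (H¹(Ω))'. Then Φ(g) = d₂(g,G) := min{‖h‖_{L²} : h ∈ L²(Ω), h + g ∈ G}, for every g for which the minimum problem is nonempty, with the convention Φ(g) = +∞ otherwise. -/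
open RealInnerProductSpace

/-- Abstract version of `Φ(g) = d₂(g, G)`.  Here `V` plays the role of
`H¹(Ω)`, `W` that of `L²(Ω)`, `e : V → W` the embedding `H¹(Ω) ↪ L²(Ω)`,
`C ⊆ V` the convex cone of nonpositive functions,
`G = {h ∈ V' : ⟨h, β⟩ ≥ 0 ∀ β ∈ C}` and `F = {β ∈ C : ‖β‖_{L²} ≤ 1}`.
An element `h ∈ L²(Ω)` acts on `V` through `β ↦ ⟪h, e β⟫`.  If the feasible
set `{h ∈ L² : h + g ∈ G}` is nonempty, then
`Φ(g) := sup_{β ∈ F} ⟨−g, β⟩ = min {‖h‖_{L²} : h + g ∈ G}`. -/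
theorem stmt_9 {V W : Type*}
    [NormedAddCommGroup V] [InnerProductSpace ℝ V] [CompleteSpace V]
    [NormedAddCommGroup W] [InnerProductSpace ℝ W] [CompleteSpace W]
    (e : V →L[ℝ] W) (C : Set V) (hCconv : Convex ℝ C)
    (hCcone : ∀ c : ℝ, 0 ≤ c → ∀ x ∈ C, c • x ∈ C) (hCcl : IsClosed C)
    (G : Set (V →L[ℝ] ℝ)) (hG : G = {h : V →L[ℝ] ℝ | ∀ β ∈ C, 0 ≤ h β})
    (g : V →L[ℝ] ℝ)
    (hfeas : ∃ h : W, ((fun β => ⟪h, e β⟫) : V → ℝ) ∈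
      {φ : V → ℝ | ∃ H ∈ G, ∀ β, (H β : ℝ) = φ β + g β}) :
    sSup ((fun β => -(g β)) '' {β ∈ C | ‖e β‖ ≤ 1})
      = sInf {r : ℝ | ∃ h : W, ‖h‖ = r ∧
          (∃ H ∈ G, ∀ β, (H β : ℝ) = ⟪h, e β⟫ + g β)} ∧
    ∃ h : W, (∃ H ∈ G, ∀ β, (H β : ℝ) = ⟪h, e β⟫ + g β) ∧
      ‖h‖ = sInf {r : ℝ | ∃ h' : W, ‖h'‖ = r ∧
          (∃ H ∈ G, ∀ β, (H β : ℝ) = ⟪h', e β⟫ + g β)} := by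
  classical
  -- `mkH h` is the continuous linear functional `β ↦ ⟪h, e β⟫ + g β`
  set mkH : W → (V →L[ℝ] ℝ) := fun h => ((innerSL ℝ h).comp e) + g with hmkH
  have hmkH_apply : ∀ (h : W) (β : V), mkH h β = ⟪h, e β⟫ + g β := by
    intro h β; simp [hmkH]
  -- feasibility predicate
  have hfeas_iff : ∀ h : W,
      (∃ H ∈ G, ∀ β, (H β : ℝ) = ⟪h, e β⟫ + g β) ↔ ∀ β ∈ C, 0 ≤ ⟪h, e β⟫ + g β := by
    intro h
    constructor
    · rintro ⟨H, HG, hH⟩ β hβ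
      rw [← hH β]
      rw [hG] at HG
      exact HG β hβ
    · intro hfe
      refine ⟨mkH h, ?_, fun β => hmkH_apply h β⟩
      rw [hG]
      intro β hβ
      rw [hmkH_apply h β]
      exact hfe β hβ
  set T : Set ℝ := {r : ℝ | ∃ h : W, ‖h‖ = r ∧
      (∃ H ∈ G, ∀ β, (H β : ℝ) = ⟪h, e β⟫ + g β)} with hT
  rcases C.eq_empty_or_nonempty with hC | hC
  · -- degenerate case: C is empty, both sides are 0
    have himg : {β ∈ C | ‖e β‖ ≤ 1} = (∅ : Set V) := by simp [hC]
    have h0T : (0 : ℝ) ∈ T := by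
      refine ⟨0, norm_zero, (hfeas_iff 0).2 ?_⟩
      intro β hβ
      rw [hC] at hβ
      exact absurd hβ (Set.notMem_empty β)
    have hTlb : ∀ r ∈ T, (0 : ℝ) ≤ r := by
      rintro r ⟨h, rfl, -⟩
      exact norm_nonneg h
    have hInf : sInf T = 0 :=
      le_antisymm (csInf_le ⟨0, hTlb⟩ h0T) (le_csInf ⟨0, h0T⟩ hTlb)
    rw [himg, Set.image_empty, Real.sSup_empty]
    refine ⟨hInf.symm, 0, (hfeas_iff 0).2 ?_, by rw [hInf, norm_zero]⟩
    intro β hβ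
    rw [hC] at hβ
    exact absurd hβ (Set.notMem_empty β)
  · -- main case : C nonempty, hence 0 ∈ C
    obtain ⟨x₀, hx₀⟩ := hC
    have h0C : (0 : V) ∈ C := by
      have := hCcone 0 le_rfl x₀ hx₀
      rwa [zero_smul] at this
    obtain ⟨hbar, Hbar, HbarG, hHbar⟩ := hfeas
    have hbar_feas : ∀ β ∈ C, 0 ≤ ⟪hbar, e β⟫ + g β :=
      (hfeas_iff hbar).1 ⟨Hbar, HbarG, hHbar⟩
    set S₀ : Set ℝ := (fun β => -(g β)) '' {β ∈ C | ‖e β‖ ≤ 1} with hS₀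
    set M : ℝ := sSup S₀ with hM
    -- easy direction: every feasible h dominates every element of S₀
    have easy : ∀ h : W, (∀ β ∈ C, 0 ≤ ⟪h, e β⟫ + g β) → ∀ r ∈ S₀, r ≤ ‖h‖ := by
      rintro h hfe r ⟨β, ⟨hβC, hβ1⟩, rfl⟩
      have h1 : -(g β) ≤ ⟪h, e β⟫ := by linarith [hfe β hβC]
      have h2 : ⟪h, e β⟫ ≤ ‖h‖ * ‖e β‖ := real_inner_le_norm h (e β)
      have h3 : ‖h‖ * ‖e β‖ ≤ ‖h‖ * 1 := by
        exact mul_le_mul_of_nonneg_left hβ1 (norm_nonneg h)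
      simpa using h1.trans (h2.trans h3)
    have h0S₀ : (0 : ℝ) ∈ S₀ := ⟨0, ⟨h0C, by simp⟩, by simp⟩
    have hS₀ne : S₀.Nonempty := ⟨0, h0S₀⟩
    have hS₀bdd : BddAbove S₀ := ⟨‖hbar‖, fun r hr => easy hbar hbar_feas r hr⟩
    have hM0 : 0 ≤ M := le_csSup hS₀bdd h0S₀
    -- key homogeneous inequality
    have key : ∀ β ∈ C, -(g β) ≤ M * ‖e β‖ := by
      intro β hβ
      by_cases he : e β = 0
      · rw [he, norm_zero, mul_zero]
        by_contra h'
        push_neg at h'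
        have hgpos : 0 < -(g β) := h'
        set t : ℝ := (M + 1) / (-(g β)) with htdef
        have ht : 0 < t := div_pos (by linarith) hgpos
        have htβ : t • β ∈ C := hCcone t ht.le β hβ
        have hets : e (t • β) = 0 := by rw [map_smul, he, smul_zero]
        have hmem : -(g (t • β)) ∈ S₀ := ⟨t • β, ⟨htβ, by rw [hets]; simp⟩, rfl⟩
        have hle : -(g (t • β)) ≤ M := le_csSup hS₀bdd hmem
        have : -(g (t • β)) = M + 1 := by
          have hne : -(g β) ≠ 0 := ne_of_gt hgpos
          rw [map_smul, smul_eq_mul, htdef]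
          field_simp
          exact div_self (neg_ne_zero.mp hne)
        linarith
      · have hn : 0 < ‖e β‖ := norm_pos_iff.2 he
        set β' : V := ‖e β‖⁻¹ • β with hβ'def
        have hβ'C : β' ∈ C := hCcone _ (inv_nonneg.2 hn.le) β hβ
        have heβ' : ‖e β'‖ = 1 := by
          rw [hβ'def, map_smul, norm_smul, norm_inv, norm_norm]
          field_simp
        have hmem : -(g β') ∈ S₀ := ⟨β', ⟨hβ'C, by rw [heβ']⟩, rfl⟩
        have hle : -(g β') ≤ M := le_csSup hS₀bdd hmem
        have hval : -(g β') = ‖e β‖⁻¹ * (-(g β)) := by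
          rw [hβ'def, map_smul, smul_eq_mul]; ring
        rw [hval] at hle
        calc -(g β) = ‖e β‖ * (‖e β‖⁻¹ * (-(g β))) := by field_simp
          _ ≤ ‖e β‖ * M := mul_le_mul_of_nonneg_left hle hn.le
          _ = M * ‖e β‖ := mul_comm _ _
    -- the separating cone in W × ℝ
    set Q : Set (W × ℝ) :=
      {p | ∃ β ∈ C, ∃ w : W, ∃ s : ℝ, M * ‖w‖ ≤ s ∧ p = (e β + w, g β + s)} with hQ
    have hQconv : Convex ℝ Q := by
      rintro p ⟨β₁, hβ₁, w₁, s₁, hs₁, rfl⟩ q ⟨β₂, hβ₂, w₂, s₂, hs₂, rfl⟩ a b ha hb hab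
      refine ⟨a • β₁ + b • β₂, hCconv hβ₁ hβ₂ ha hb hab,
        a • w₁ + b • w₂, a * s₁ + b * s₂, ?_, ?_⟩
      · calc M * ‖a • w₁ + b • w₂‖ ≤ M * (‖a • w₁‖ + ‖b • w₂‖) :=
              mul_le_mul_of_nonneg_left (norm_add_le _ _) hM0
          _ = a * (M * ‖w₁‖) + b * (M * ‖w₂‖) := by
              rw [norm_smul, norm_smul, Real.norm_eq_abs, Real.norm_eq_abs,
                abs_of_nonneg ha, abs_of_nonneg hb]; ring
          _ ≤ a * s₁ + b * s₂ := by
              have := mul_le_mul_of_nonneg_left hs₁ ha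
              have := mul_le_mul_of_nonneg_left hs₂ hb
              linarith
      · simp only [Prod.smul_mk, Prod.mk_add_mk, smul_eq_mul, Prod.mk.injEq]
        constructor
        · rw [map_add, map_smul, map_smul]
          module
        · rw [map_add, map_smul, map_smul]
          simp only [smul_eq_mul]
          ring
    have hQcone : ∀ p ∈ Q, ∀ t : ℝ, 0 < t → t • p ∈ Q := by
      rintro p ⟨β, hβ, w, s, hs, rfl⟩ t ht
      refine ⟨t • β, hCcone t ht.le β hβ, t • w, t * s, ?_, ?_⟩
      · rw [norm_smul, Real.norm_eq_abs, abs_of_nonneg ht.le]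
        calc M * (t * ‖w‖) = t * (M * ‖w‖) := by ring
          _ ≤ t * s := mul_le_mul_of_nonneg_left hs ht.le
      · simp only [Prod.smul_mk, Prod.mk.injEq, smul_eq_mul]
        constructor
        · rw [map_smul, smul_add]
        · rw [map_smul]
          simp only [smul_eq_mul]
          ring
    have hQsub : Q ⊆ {p : W × ℝ | 0 ≤ p.2 + M * ‖p.1‖} := by
      rintro p ⟨β, hβ, w, s, hs, rfl⟩
      have h1 : -(g β) ≤ M * ‖e β‖ := key β hβ
      have h2 : ‖e β‖ ≤ ‖e β + w‖ + ‖w‖ := by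
        have := norm_add_le (e β + w) (-w)
        simpa using this
      have h3 : M * ‖e β‖ ≤ M * ‖e β + w‖ + M * ‖w‖ := by
        calc M * ‖e β‖ ≤ M * (‖e β + w‖ + ‖w‖) := mul_le_mul_of_nonneg_left h2 hM0
          _ = M * ‖e β + w‖ + M * ‖w‖ := by ring
      simp only [Set.mem_setOf_eq]
      linarith
    have hclosed : IsClosed {p : W × ℝ | 0 ≤ p.2 + M * ‖p.1‖} := by
      apply isClosed_le continuous_const
      exact (continuous_snd.add (continuous_const.mul (continuous_fst.norm)))
    have hnotin : ((0 : W), (-1 : ℝ)) ∉ closure Q := by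
      intro hmem
      have := closure_minimal hQsub hclosed hmem
      simp only [Set.mem_setOf_eq, norm_zero, mul_zero, add_zero] at this
      linarith
    obtain ⟨f, u, hfu, hux⟩ :=
      geometric_hahn_banach_closed_point (hQconv.closure) isClosed_closure hnotin
    have h0Q : ((0 : W), (0 : ℝ)) ∈ Q := ⟨0, h0C, 0, 0, by simp, by simp⟩
    have hu0 : 0 < u := by
      have := hfu _ (subset_closure h0Q)
      have h00 : f ((0 : W), (0 : ℝ)) = 0 := map_zero f
      rw [h00] at this
      exact this
    have hfle : ∀ p ∈ Q, f p ≤ 0 := by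
      intro p hp
      by_contra h'
      push_neg at h'
      have ht : 0 < u / f p := div_pos hu0 h'
      have := hfu _ (subset_closure (hQcone p hp _ ht))
      rw [map_smul, smul_eq_mul, div_mul_cancel₀ u (ne_of_gt h')] at this
      exact lt_irrefl u this
    set c : ℝ := f (0, -1) with hc
    have hcpos : 0 < c := lt_trans hu0 hux
    -- decompose f
    have hfdec : ∀ (w : W) (s : ℝ), f (w, s) = f (w, 0) - s * c := by
      intro w s
      have h1 : (w, s) = (w, (0 : ℝ)) + (-s) • ((0 : W), (-1 : ℝ)) := by
        simp [Prod.ext_iff]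
      rw [h1, map_add, map_smul, smul_eq_mul, hc]
      ring
    set φ : W →L[ℝ] ℝ := -(f.comp (ContinuousLinearMap.inl ℝ W ℝ)) with hφ
    have hφapp : ∀ w : W, φ w = -f (w, 0) := by intro w; simp [hφ]
    set h : W := (InnerProductSpace.toDual ℝ W).symm φ with hh
    have hinner : ∀ w : W, ⟪h, w⟫ = φ w := by
      intro w
      rw [hh]
      exact InnerProductSpace.toDual_symm_apply
    -- the two families of inequalities
    have hkey1 : ∀ β ∈ C, 0 ≤ ⟪h, e β⟫ + g β * c := by
      intro β hβ
      have hmem : ((e β, g β) : W × ℝ) ∈ Q := ⟨β, hβ, 0, 0, by simp, by simp⟩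
      have := hfle _ hmem
      rw [hfdec (e β) (g β)] at this
      rw [hinner, hφapp]
      linarith
    have hkey2 : ∀ (w : W) (s : ℝ), M * ‖w‖ ≤ s → 0 ≤ ⟪h, w⟫ + s * c := by
      intro w s hws
      have hmem : ((w, s) : W × ℝ) ∈ Q := ⟨0, h0C, w, s, hws, by simp⟩
      have := hfle _ hmem
      rw [hfdec w s] at this
      rw [hinner, hφapp]
      linarith
    have hnorm : ‖h‖ ≤ M * c := by
      have := hkey2 (-h) (M * ‖h‖) (by rw [norm_neg])
      rw [inner_neg_right, real_inner_self_eq_norm_sq] at this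
      rcases eq_or_lt_of_le (norm_nonneg h) with h0 | h0
      · rw [← h0]
        exact mul_nonneg hM0 hcpos.le
      · have h2 : ‖h‖ * ‖h‖ ≤ (M * c) * ‖h‖ := by nlinarith
        exact le_of_mul_le_mul_right h2 h0
    set hstar : W := c⁻¹ • h with hhstar
    have hstar_norm_le : ‖hstar‖ ≤ M := by
      rw [hhstar, norm_smul, norm_inv, Real.norm_eq_abs, abs_of_pos hcpos]
      calc c⁻¹ * ‖h‖ ≤ c⁻¹ * (M * c) :=
            mul_le_mul_of_nonneg_left hnorm (inv_nonneg.2 hcpos.le)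
        _ = M := by field_simp
    have hstar_feas : ∀ β ∈ C, 0 ≤ ⟪hstar, e β⟫ + g β := by
      intro β hβ
      have h1 := hkey1 β hβ
      have h2 : 0 ≤ c⁻¹ * (⟪h, e β⟫ + g β * c) :=
        mul_nonneg (inv_nonneg.2 hcpos.le) h1
      rw [hhstar, real_inner_smul_left]
      have hcne : c ≠ 0 := ne_of_gt hcpos
      calc (0:ℝ) ≤ c⁻¹ * (⟪h, e β⟫ + g β * c) := h2
        _ = c⁻¹ * ⟪h, e β⟫ + g β := by field_simp
    -- conclude
    have hMle : M ≤ ‖hstar‖ := csSup_le hS₀ne (easy hstar hstar_feas)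
    have hstar_norm : ‖hstar‖ = M := le_antisymm hstar_norm_le hMle
    have hMT : M ∈ T := ⟨hstar, hstar_norm, (hfeas_iff hstar).2 hstar_feas⟩
    have hTlb : ∀ r ∈ T, M ≤ r := by
      rintro r ⟨h', rfl, hfe⟩
      exact csSup_le hS₀ne (easy h' ((hfeas_iff h').1 hfe))
    have hInf : sInf T = M :=
      le_antisymm (csInf_le ⟨M, hTlb⟩ hMT) (le_csInf ⟨M, hMT⟩ hTlb)
    exact ⟨hInf.symm, hstar, (hfeas_iff hstar).2 hstar_feas, by rw [hInf, hstar_norm]⟩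
end

section
/- Let t°: [0,S] → [0,T] be nondecreasing and 1-Lipschitz, and let (t_ε) be a sequence of nondecreasing 1-Lipschitz functions converging to t° weakly* in W^{1,∞}(0,S). Let D° := {s ∈ (0,S) : ṫ°(s) = 0}. Then limsup_{ε→0} ṫ_ε(s) > 0 for a.e. s ∈ (0,S) \ D°. -/
open MeasureTheory Filter

lemma deriv_mem_Icc_of_mono_lip {S : ℝ} {f : ℝ → ℝ}
    (hmono : MonotoneOn f (Set.Icc 0 S))
    (hlip : LipschitzOnWith 1 f (Set.Icc 0 S))
    {s : ℝ} (hs : s ∈ Set.Ioo 0 S) :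
    deriv f s ∈ Set.Icc (0:ℝ) 1 := by
  by_cases hd : DifferentiableAt ℝ f s
  · have hds : Tendsto (slope f s) (nhdsWithin s {s}ᶜ) (nhds (deriv f s)) :=
      hasDerivAt_iff_tendsto_slope.1 hd.hasDerivAt
    have hds' : Tendsto (slope f s) (nhdsWithin s (Set.Ioi s)) (nhds (deriv f s)) :=
      hds.mono_left (nhdsWithin_mono s (fun x hx => ne_of_gt hx))
    have hmem : ∀ᶠ x in nhdsWithin s (Set.Ioi s), x ∈ Set.Ioc s S :=
      Ioc_mem_nhdsGT_of_mem ⟨le_refl s, hs.2⟩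
    have hsI : s ∈ Set.Icc 0 S := ⟨hs.1.le, hs.2.le⟩
    constructor
    · refine ge_of_tendsto hds' ?_
      filter_upwards [hmem] with x hx
      have hxI : x ∈ Set.Icc 0 S := ⟨(hs.1.trans hx.1).le, hx.2⟩
      have h1 : f s ≤ f x := hmono hsI hxI hx.1.le
      rw [slope_def_field]
      exact div_nonneg (sub_nonneg.2 h1) (sub_pos.2 hx.1).le
    · refine le_of_tendsto hds' ?_
      filter_upwards [hmem] with x hx
      have hxI : x ∈ Set.Icc 0 S := ⟨(hs.1.trans hx.1).le, hx.2⟩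
      have h1 : dist (f x) (f s) ≤ 1 * dist x s := hlip.dist_le_mul x hxI s hsI
      rw [one_mul, Real.dist_eq, Real.dist_eq] at h1
      rw [slope_def_field, div_le_one (sub_pos.2 hx.1)]
      calc f x - f s ≤ |f x - f s| := le_abs_self _
        _ ≤ |x - s| := h1
        _ = x - s := abs_of_pos (sub_pos.2 hx.1)
  · simp [deriv_zero_of_not_differentiableAt hd]

/-- Let `t_n` be nondecreasing 1-Lipschitz functions on `[0,S]` converging
weakly* in `W^{1,∞}(0,S)` (i.e. uniformly, with weak* convergence of the
derivatives) to a nondecreasing 1-Lipschitz `t°`.  Then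
`limsup_n ṫ_n(s) > 0` for a.e. `s ∈ (0,S)` outside
`D° = {s : ṫ°(s) = 0}`. -/
theorem stmt_18 (S : ℝ) (hS : 0 < S)
    (tε : ℕ → ℝ → ℝ) (t0 : ℝ → ℝ)
    (hmono : ∀ n, MonotoneOn (tε n) (Set.Icc 0 S))
    (hlip : ∀ n, LipschitzOnWith 1 (tε n) (Set.Icc 0 S))
    (hmono0 : MonotoneOn t0 (Set.Icc 0 S))
    (hlip0 : LipschitzOnWith 1 t0 (Set.Icc 0 S))
    (hunif : TendstoUniformlyOn (fun n => tε n) t0 atTop (Set.Icc 0 S))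
    (hweak : ∀ φ : ℝ → ℝ, IntegrableOn φ (Set.Ioo 0 S) volume →
      Tendsto (fun n => ∫ s in Set.Ioo (0:ℝ) S, deriv (tε n) s * φ s)
        atTop (nhds (∫ s in Set.Ioo (0:ℝ) S, deriv t0 s * φ s))) :
    ∀ᵐ s ∂(volume.restrict (Set.Ioo (0:ℝ) S)),
      deriv t0 s ≠ 0 → 0 < limsup (fun n => deriv (tε n) s) atTop := by
  set L : ℝ → ℝ := fun s => limsup (fun n => deriv (tε n) s) atTop with hLdef
  have hmeasL : Measurable L := Measurable.limsup (fun n => measurable_deriv _)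
  set A : Set ℝ := Set.Ioo 0 S ∩ ({s | deriv t0 s ≠ 0} ∩ {s | ¬ 0 < L s}) with hAdef
  have hAmeas : MeasurableSet A :=
    measurableSet_Ioo.inter
      (((measurable_deriv t0) (measurableSet_singleton (0:ℝ))).compl.inter
        ((hmeasL measurableSet_Ioi).compl))
  have hAsub : A ⊆ Set.Ioo 0 S := fun s hs => hs.1
  have hAfin : volume A < ⊤ :=
    lt_of_le_of_lt (measure_mono hAsub) measure_Ioo_lt_top
  rw [ae_restrict_iff' measurableSet_Ioo, ae_iff]
  have hset : {a | ¬(a ∈ Set.Ioo (0:ℝ) S → deriv t0 a ≠ 0 →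
      0 < limsup (fun n => deriv (tε n) a) atTop)} = A := by
    ext x
    simp only [hAdef, hLdef, Set.mem_setOf_eq, Set.mem_inter_iff, Classical.not_imp]
  rw [hset]
  by_contra hApos
  have hApos' : 0 < volume A := pos_iff_ne_zero.2 hApos
  -- pointwise bounds on A
  have hbd : ∀ s ∈ A, ∀ n, deriv (tε n) s ∈ Set.Icc (0:ℝ) 1 := fun s hs n =>
    deriv_mem_Icc_of_mono_lip (hmono n) (hlip n) (hAsub hs)
  have hbd0 : ∀ s ∈ A, 0 < deriv t0 s := by
    intro s hs
    have := deriv_mem_Icc_of_mono_lip hmono0 hlip0 (hAsub hs)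
    exact lt_of_le_of_ne this.1 (Ne.symm hs.2.1)
  -- pointwise convergence to 0 on A
  have hptwise : ∀ s ∈ A, Tendsto (fun n => deriv (tε n) s) atTop (nhds 0) := by
    intro s hs
    have hub : IsBoundedUnder (· ≤ ·) atTop (fun n => deriv (tε n) s) :=
      isBoundedUnder_of ⟨1, fun n => (hbd s hs n).2⟩
    have hlb : IsBoundedUnder (· ≥ ·) atTop (fun n => deriv (tε n) s) :=
      isBoundedUnder_of ⟨0, fun n => (hbd s hs n).1⟩
    have hsup : limsup (fun n => deriv (tε n) s) atTop ≤ 0 := not_lt.1 hs.2.2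
    have hinf : (0:ℝ) ≤ liminf (fun n => deriv (tε n) s) atTop :=
      le_liminf_of_le hub.isCoboundedUnder_ge
        (Eventually.of_forall fun n => (hbd s hs n).1)
    exact tendsto_of_le_liminf_of_limsup_le hinf hsup hub hlb
  -- dominated convergence
  have hDCT : Tendsto (fun n => ∫ s in A, deriv (tε n) s) atTop
      (nhds (∫ s in A, (0:ℝ))) := by
    refine tendsto_integral_of_dominated_convergence (fun _ => (1:ℝ))
      (fun n => (measurable_deriv (tε n)).aestronglyMeasurable) ?_ ?_ ?_
    · exact (integrableOn_const_iff).2 (Or.inr hAfin)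
    · intro n
      rw [ae_restrict_iff' hAmeas]
      exact Eventually.of_forall fun s hs => by
        show ‖deriv (tε n) s‖ ≤ 1
        rw [Real.norm_eq_abs, abs_le]
        exact ⟨by linarith [(hbd s hs n).1], (hbd s hs n).2⟩
    · rw [ae_restrict_iff' hAmeas]
      exact Eventually.of_forall hptwise
  rw [integral_zero] at hDCT
  -- weak convergence applied to the indicator of A
  have hφint : IntegrableOn (A.indicator fun _ => (1:ℝ)) (Set.Ioo 0 S) volume :=
    ((integrableOn_const_iff).2 (Or.inr measure_Ioo_lt_top)).indicator hAmeas
  have hconv := hweak (A.indicator fun _ => (1:ℝ)) hφint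
  have hrw : ∀ g : ℝ → ℝ,
      ∫ s in Set.Ioo (0:ℝ) S, g s * (A.indicator fun _ => (1:ℝ)) s = ∫ s in A, g s := by
    intro g
    have : (fun s => g s * (A.indicator fun _ => (1:ℝ)) s) = A.indicator g := by
      ext x
      by_cases hx : x ∈ A <;>
        simp [Set.indicator_of_mem, Set.indicator_of_notMem, hx]
    rw [this, setIntegral_indicator hAmeas,
      Set.inter_eq_self_of_subset_right hAsub]
  simp only [hrw] at hconv
  -- the limit is positive
  have hintA : IntegrableOn (deriv t0) A volume := by
    refine Measure.integrableOn_of_bounded (M := 1) hAfin.ne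
      (measurable_deriv t0).aestronglyMeasurable ?_
    rw [ae_restrict_iff' hAmeas]
    refine Eventually.of_forall fun s hs => ?_
    have := deriv_mem_Icc_of_mono_lip hmono0 hlip0 (hAsub hs)
    show ‖deriv t0 s‖ ≤ 1
    rw [Real.norm_eq_abs, abs_le]
    exact ⟨by linarith [this.1], this.2⟩
  have hintpos : 0 < ∫ s in A, deriv t0 s := by
    refine (setIntegral_pos_iff_support_of_nonneg_ae ?_ hintA).2 ?_
    · rw [EventuallyLE, ae_restrict_iff' hAmeas]
      exact Eventually.of_forall fun s hs => (hbd0 s hs).le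
    · refine lt_of_lt_of_le hApos' (measure_mono ?_)
      intro s hs
      exact ⟨fun h => (hbd0 s hs).ne' h, hs⟩
  have := tendsto_nhds_unique hDCT hconv
  linarith
end
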